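/- arXiv:2507.11254 — 2 statements merged into one kernel-verified Lean document; each statement's English description precedes it below -/
import Mathlib

section
/- Let T and T' be two rooted binary phylogenetic X-trees with |X| = n and let σ be an ordering on X. Suppose T and T' have a common pendant subtree S. Then the OLA labeling of S under σ is identical for T and T', and moreover the OLA vectors of T and T' under σ, restricted to the coordinates associated with the leaves of S, have Hamming distance at most 1. -/
namespace Phylo

/-- A rooted binary tree with leaves labelled by `W`.  A rooted binary
phylogenetic tree (whose root has out-degree one) is represented by the
subtree hanging below the root's unique child; the root edge is implicit. -/
inductive PTree (W : Type) where
  | leaf (x : W)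
  | node (l r : PTree W)
  deriving DecidableEq

namespace PTree

variable {W V : Type}

def leaves : PTree W → List W
  | leaf x => [x]
  | node l r => l.leaves ++ r.leaves

def map (f : W → V) : PTree W → PTree V
  | leaf x => leaf (f x)
  | node l r => node (l.map f) (r.map f)

/-- A tree is a phylogenetic tree when its leaves are bijectively labelled,
i.e. no label occurs twice. -/
def IsPhylo (t : PTree W) : Prop := t.leaves.Nodup

def labelSet [DecidableEq W] (t : PTree W) : Finset W := t.leaves.toFinset

end PTree

open PTree

/-- An ordering on the label set of `t`: a bijection from the leaf labels
onto `{1, …, n}`. -/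
def IsOrd [DecidableEq W] (t : PTree W) (σ : W → ℕ) : Prop :=
  Set.BijOn σ ↑t.labelSet (Set.Icc 1 t.leaves.length)

/-! ### Basic operations on trees with natural-number (rank) labels -/

def minLeaf : PTree ℕ → ℕ
  | .leaf x => x
  | .node l r => min (minLeaf l) (minLeaf r)

/-- Restriction of a tree to the leaves satisfying `p` (suppressing vertices
of out-degree one); `none` if no leaf survives. -/
def restrict {W : Type} (p : W → Bool) : PTree W → Option (PTree W)
  | .leaf x => if p x then some (.leaf x) else none
  | .node l r =>
    match restrict p l, restrict p r with
    | some a, some b => some (.node a b)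
    | some a, none => some a
    | none, some b => some b
    | none, none => none

/-- The sibling subtree of the leaf labelled `i` (the other child of its
parent), if the leaf occurs. -/
def sibling {W : Type} [DecidableEq W] (i : W) : PTree W → Option (PTree W)
  | .leaf _ => none
  | .node l r =>
    if l = .leaf i then some r
    else if r = .leaf i then some l
    else match sibling i l with
      | some s => some s
      | none => sibling i r

/-- Hamming distance between two (equal-length) vectors. -/
def hamming {α : Type} [DecidableEq α] (u v : List α) : ℕ :=
  (u.zip v).countP fun p => decide (p.1 ≠ p.2)

/-! ### OLA -/

/-- The OLA label of a vertex, given as the root of its subtree (inside a tree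
whose leaves are labelled by ranks):  a leaf is labelled by its rank, and the
internal vertex created when the `j`-th leaf was attached is labelled `-j`;
this creation step equals the larger of the two minimal leaf ranks below. -/
def olaLabel : PTree ℕ → ℤ
  | .leaf x => (x : ℤ)
  | .node l r => -(max (minLeaf l) (minLeaf r) : ℤ)

/-- The `i`-th coordinate (for `i ≥ 3`) of the OLA vector:  the OLA label of
the sibling of the rank-`i` leaf in the restriction of `t` to ranks `≤ i`. -/
def olaCoord (t : PTree ℕ) (i : ℕ) : ℤ :=
  match restrict (fun x => decide (x ≤ i)) t with
  | some ti =>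
    match sibling i ti with
    | some s => olaLabel s
    | none => 0
  | none => 0

/-- The OLA vector of a tree whose leaves are labelled by ranks `1, …, n`. -/
def olaVec (t : PTree ℕ) : List ℤ :=
  (List.range t.leaves.length).map fun j =>
    if j = 0 then 0 else if j = 1 then 1 else olaCoord t (j + 1)

/-- The OLA distance of `t, t'` with respect to the ordering `σ`. -/
def dOLA {W : Type} (σ : W → ℕ) (t t' : PTree W) : ℕ :=
  hamming (olaVec (t.map σ)) (olaVec (t'.map σ))

/-- The OLA measure: minimum OLA distance over all orderings. -/
noncomputable def dOLAstar {W : Type} [DecidableEq W] (t t' : PTree W) : ℕ :=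
  sInf {k | ∃ σ : W → ℕ, IsOrd t σ ∧ dOLA σ t t' = k}

end Phylo
/-! ### HOP -/

namespace Phylo
open PTree

/-- The HOP labels of the internal vertices on the path from the root of `t`
down to the leaf of rank `i` (the internal HOP label of a vertex with children
`l, r` is `max (minLeaf l) (minLeaf r)`). -/
def pathLabels (i : ℕ) : PTree ℕ → List ℕ
  | .leaf _ => []
  | .node l r =>
    if i ∈ l.leaves then max (minLeaf l) (minLeaf r) :: pathLabels i l
    else if i ∈ r.leaves then max (minLeaf l) (minLeaf r) :: pathLabels i r
    else []

/-- The `i`-th path segment `v(P_i)` of the HOP vector of `t`:  the internal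
labels strictly between the internal vertex labelled `i` and the leaf of rank
`i` (for `i = 1` the vertex labelled `1` is the root `ρ`). -/
def hopSeg (t : PTree ℕ) (i : ℕ) : List ℕ :=
  if i = 1 then 1 :: pathLabels 1 t
  else ((pathLabels i t).dropWhile fun a => decide (a ≠ i)).drop 1

/-- Length of a longest common subsequence of two lists. -/
def lcsLen : List ℕ → List ℕ → ℕ
  | [], _ => 0
  | _ :: _, [] => 0
  | a :: u, b :: v =>
    if a = b then lcsLen u v + 1
    else max (lcsLen (a :: u) v) (lcsLen u (b :: v))
  termination_by u v => u.length + v.length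
  decreasing_by all_goals (simp only [List.length_cons]; omega)

/-- The HOP similarity of `t, t'` with respect to `σ`. -/
def simHOP {W : Type} (σ : W → ℕ) (t t' : PTree W) : ℕ :=
  ∑ i ∈ Finset.range (t.leaves.length - 1),
    lcsLen (hopSeg (t.map σ) (i + 1)) (hopSeg (t'.map σ) (i + 1))

/-- The HOP distance of `t, t'` with respect to `σ`. -/
def dHOP {W : Type} (σ : W → ℕ) (t t' : PTree W) : ℕ :=
  t.leaves.length - simHOP σ t t'

/-- The HOP measure: minimum HOP distance over all orderings. -/
noncomputable def dHOPstar {W : Type} [DecidableEq W] (t t' : PTree W) : ℕ :=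
  sInf {k | ∃ σ : W → ℕ, IsOrd t σ ∧ dHOP σ t t' = k}

end Phylo
/-! ### Phylo2Vec (P2V) -/

namespace Phylo
open PTree

/-- Binary trees with rank-labelled leaves and optionally labelled internal
vertices, used to run the P2V labelling algorithm. -/
inductive LTree where
  | leaf (r : ℕ)
  | node (lbl : Option ℕ) (l r : LTree)
  deriving DecidableEq

namespace LTree

def ofPTree : PTree ℕ → LTree
  | .leaf x => .leaf x
  | .node l r => .node none (ofPTree l) (ofPTree r)

/-- The label of the root of an `LTree` (a leaf is labelled by its rank). -/
def lbl? : LTree → Option ℕ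
  | .leaf r => some r
  | .node lbl _ _ => lbl

/-- The candidate vertices for the next P2V label: unlabelled internal
vertices both of whose children are labelled, together with the larger child
label; a vertex is recorded by its position (a list of booleans). -/
def cands : LTree → List (List Bool × ℕ)
  | .leaf _ => []
  | .node lbl l r =>
    (match lbl, l.lbl?, r.lbl? with
      | none, some a, some b => [(([] : List Bool), max a b)]
      | _, _, _ => []) ++
    (cands l).map (fun p => (false :: p.1, p.2)) ++
    (cands r).map (fun p => (true :: p.1, p.2))

/-- Set the label of the vertex at position `p` to `j`. -/
def setLbl (j : ℕ) : LTree → List Bool → LTree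
  | .leaf r, _ => .leaf r
  | .node _ l r, [] => .node (some j) l r
  | .node lbl l r, false :: p => .node lbl (setLbl j l p) r
  | .node lbl l r, true :: p => .node lbl l (setLbl j r p)

/-- One step of the P2V labelling: give label `j` to the candidate vertex
whose larger child label is maximal. -/
def step (j : ℕ) (t : LTree) : LTree :=
  match List.argmax Prod.snd t.cands with
  | some c => setLbl j t c.1
  | none => t

/-- Run `k` steps of the P2V labelling, starting with label `j`. -/
def run : ℕ → ℕ → LTree → LTree
  | 0, _, t => t
  | k + 1, j, t => run k (j + 1) (step j t)

def siblingL (i : ℕ) : LTree → Option LTree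
  | .leaf _ => none
  | .node _ l r =>
    if l = .leaf i then some r
    else if r = .leaf i then some l
    else match siblingL i l with
      | some s => some s
      | none => siblingL i r

def subAtL : LTree → List Bool → Option LTree
  | t, [] => some t
  | .leaf _, _ :: _ => none
  | .node _ l _, false :: p => subAtL l p
  | .node _ _ r, true :: p => subAtL r p

end LTree

/-- The `i`-th step P2V labelling of the restriction `T_i` of `t` to ranks
`≤ i`:  the internal vertices are labelled `i+1, …, 2i-1`. -/
def p2vLabeled (t : PTree ℕ) (i : ℕ) : Option LTree :=
  (restrict (fun x => decide (x ≤ i)) t).map fun ti =>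
    LTree.run (i - 1) (i + 1) (LTree.ofPTree ti)

/-- The `i`-th coordinate (for `i ≥ 3`) of the P2V vector: the `i`-th step
P2V label of the sibling of the rank-`i` leaf in `T_i`. -/
def p2vCoord (t : PTree ℕ) (i : ℕ) : ℤ :=
  match p2vLabeled t i with
  | some lt =>
    match LTree.siblingL i lt with
    | some s => ((LTree.lbl? s).getD 0 : ℤ)
    | none => 0
  | none => 0

/-- The P2V vector of a tree whose leaves are labelled by ranks `1, …, n`. -/
def p2vVec (t : PTree ℕ) : List ℤ :=
  (List.range t.leaves.length).map fun j =>
    if j = 0 then 0 else if j = 1 then 1 else p2vCoord t (j + 1)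

/-- The P2V distance of `t, t'` with respect to `σ`. -/
def dP2V {W : Type} (σ : W → ℕ) (t t' : PTree W) : ℕ :=
  hamming (p2vVec (t.map σ)) (p2vVec (t'.map σ))

/-- The P2V measure: minimum P2V distance over all orderings. -/
noncomputable def dP2Vstar {W : Type} [DecidableEq W] (t t' : PTree W) : ℕ :=
  sInf {k | ∃ σ : W → ℕ, IsOrd t σ ∧ dP2V σ t t' = k}

end Phylo
/-! ### Isomorphism, positions, and the rSPR distance -/

namespace Phylo
open PTree

/-- Isomorphism of rooted (leaf-labelled) binary trees: the shapes agree up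
to swapping children, and corresponding leaves carry the same label. -/
inductive Iso {W : Type} : PTree W → PTree W → Prop
  | leaf (x : W) : Iso (.leaf x) (.leaf x)
  | node {a b c d : PTree W} : Iso a c → Iso b d → Iso (.node a b) (.node c d)
  | swap {a b c d : PTree W} : Iso a d → Iso b c → Iso (.node a b) (.node c d)

/-- The subtree of `t` at position `p` (a list of booleans: `false` = left
child, `true` = right child). -/
def subAt {W : Type} : PTree W → List Bool → Option (PTree W)
  | t, [] => some t
  | .leaf _, _ :: _ => none
  | .node l _, false :: p => subAt l p
  | .node _ r, true :: p => subAt r p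

/-- Replace the subtree of `t` at position `p` by `s`. -/
def replaceAt {W : Type} : PTree W → List Bool → PTree W → PTree W
  | _, [], s => s
  | .leaf x, _ :: _, _ => .leaf x
  | .node l r, false :: p, s => .node (replaceAt l p s) r
  | .node l r, true :: p, s => .node l (replaceAt r p s)

/-- The position of the leaf labelled `x` in `t`, if it occurs. -/
def leafPos {W : Type} [DecidableEq W] (x : W) : PTree W → Option (List Bool)
  | .leaf y => if y = x then some [] else none
  | .node l r =>
    match leafPos x l with
    | some p => some (false :: p)
    | none => (leafPos x r).map (true :: ·)

/-- The position of the leaf labelled `x` (defaulting to the root). -/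
def pos {W : Type} [DecidableEq W] (t : PTree W) (x : W) : List Bool :=
  (leafPos x t).getD []

/-- One-hole contexts: plugging a tree into a context reconstructs a tree.
Each frame records a sibling subtree and on which side it sits. -/
def plug {W : Type} : List (Bool × PTree W) → PTree W → PTree W
  | [], t => t
  | (false, s) :: c, t => .node (plug c t) s
  | (true, s) :: c, t => .node s (plug c t)

/-- A single rooted subtree prune and regraft (rSPR) move: prune the subtree
`s` (whose parent is an internal vertex of `t`), suppress its parent, and
regraft `s` by subdividing an edge (possibly the root edge) of the remaining
tree. -/
def RSPRMove {W : Type} (t t' : PTree W) : Prop :=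
  ∃ (c₁ : List (Bool × PTree W)) (s r : PTree W),
    (t = plug c₁ (.node s r) ∨ t = plug c₁ (.node r s)) ∧
    ∃ (c₂ : List (Bool × PTree W)) (b : PTree W),
      plug c₁ r = plug c₂ b ∧
      (t' = plug c₂ (.node s b) ∨ t' = plug c₂ (.node b s))

/-- `Reach k t t'`: `t` can be transformed into (a tree isomorphic to) `t'`
by `k` rSPR moves. -/
inductive Reach {W : Type} : ℕ → PTree W → PTree W → Prop
  | refl {t t' : PTree W} : Iso t t' → Reach 0 t t'
  | step {k : ℕ} {t u t' : PTree W} :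
      RSPRMove t u → Reach k u t' → Reach (k + 1) t t'

/-- The rSPR distance. -/
noncomputable def dRSPR {W : Type} (t t' : PTree W) : ℕ :=
  sInf {k | Reach k t t'}

end Phylo
/-! ### Agreement forests and the hybrid number -/

namespace Phylo
open PTree

/-- Longest common prefix of two positions. -/
def lcp : List Bool → List Bool → List Bool
  | a :: u, b :: v => if a = b then a :: lcp u v else []
  | _, _ => []

variable {W : Type} [DecidableEq W]

/-- Restriction of `t` to the labels in the finite set `L`. -/
def restrictF (t : PTree W) (L : Finset W) : Option (PTree W) :=
  restrict (fun x => decide (x ∈ L)) t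

/-- The vertex set (as a set of positions) of the minimal subtree `T(L)` of
`t` connecting the leaves with labels in `L`. -/
def compVerts (t : PTree W) (L : Finset W) : Set (List Bool) :=
  {p | ∃ a ∈ L, ∃ b ∈ L,
    lcp (pos t a) (pos t b) <+: p ∧ (p <+: pos t a ∨ p <+: pos t b)}

/-- The vertex set of the minimal subtree of `t` connecting the leaves with
labels in `L` together with the root `ρ`. -/
def rhoVerts (t : PTree W) (L : Finset W) : Set (List Bool) :=
  {p | ∃ a ∈ L, p <+: pos t a}

/-- The position of the root of the minimal connecting subtree `T(L)`. -/
noncomputable def rootOf (t : PTree W) (L : Finset W) : List Bool :=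
  match L.toList with
  | [] => []
  | a :: rest => rest.foldr (fun b acc => lcp (pos t b) acc) (pos t a)

/-- `Lρ` (the label set of the component containing the root `ρ`, possibly
empty) together with the nonempty label sets in `C` form an agreement forest
for `t` and `t'`. -/
def IsAgreementForest (t t' : PTree W) (Lρ : Finset W) (C : Finset (Finset W)) : Prop :=
  -- the label sets partition the common label set
  (∀ L ∈ C, L.Nonempty) ∧
  (∀ L ∈ C, ∀ L' ∈ C, L ≠ L' → Disjoint L L') ∧
  (∀ L ∈ C, Disjoint Lρ L) ∧
  (∀ x ∈ t.labelSet, x ∈ Lρ ∨ ∃ L ∈ C, x ∈ L) ∧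
  (↑Lρ ⊆ (t.labelSet : Set W)) ∧ (∀ L ∈ C, ↑L ⊆ (t.labelSet : Set W)) ∧
  -- the restrictions of t and t' to each label set are isomorphic
  (∀ L ∈ insert Lρ C,
    ∀ u, restrictF t L = some u → ∃ u', restrictF t' L = some u' ∧ Iso u u') ∧
  -- the minimal connecting subtrees are vertex-disjoint, in t and in t'
  (∀ L ∈ C, ∀ L' ∈ C, L ≠ L' →
    (∀ p ∈ compVerts t L, p ∉ compVerts t L') ∧
    (∀ p ∈ compVerts t' L, p ∉ compVerts t' L')) ∧
  (∀ L ∈ C,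
    (∀ p ∈ rhoVerts t Lρ, p ∉ compVerts t L) ∧
    (∀ p ∈ rhoVerts t' Lρ, p ∉ compVerts t' L))

/-- The ancestor relation between components of an agreement forest: the root
of `T(L)` is a (proper) ancestor of the root of `T(L')` in `t` or in `t'`. -/
def afEdge (t t' : PTree W) (C : Finset (Finset W)) (L L' : Finset W) : Prop :=
  L ∈ C ∧ L' ∈ C ∧ L ≠ L' ∧
  ((rootOf t L <+: rootOf t L' ∧ rootOf t L ≠ rootOf t L') ∨
   (rootOf t' L <+: rootOf t' L' ∧ rootOf t' L ≠ rootOf t' L'))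

/-- An acyclic agreement forest. -/
def IsAcyclicAF (t t' : PTree W) (Lρ : Finset W) (C : Finset (Finset W)) : Prop :=
  IsAgreementForest t t' Lρ C ∧
  ∀ L, ¬ Relation.TransGen (afEdge t t' C) L L

/-- The hybrid number of `t` and `t'`: the minimum number of non-root
components of an acyclic agreement forest (Baroni–Semple–Steel). -/
noncomputable def hyb (t t' : PTree W) : ℕ :=
  sInf {k | ∃ Lρ C, IsAcyclicAF t t' Lρ C ∧ C.card = k}

/-! ### Caterpillars and cherry-picking sequences -/

/-- The caterpillar `(z₁, z₂, z₃, …)`: `z₁, z₂` form a cherry and each later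
leaf is attached above the previous ones. -/
def caterpillar (z₁ z₂ : W) (zs : List W) : PTree W :=
  zs.foldl (fun t z => .node t (.leaf z)) (.node (.leaf z₁) (.leaf z₂))

/-- The cherry partner of the leaf `x` in `t`, if `x` is in a cherry. -/
def cherryPartner (x : W) (t : PTree W) : Option W :=
  match sibling x t with
  | some (.leaf y) => some y
  | _ => none

/-- The restriction of `t` obtained by deleting the first `i` elements of the
sequence `S`. -/
def restAfter (t : PTree W) (S : List W) (i : ℕ) : Option (PTree W) :=
  restrict (fun x => decide (x ∉ S.take i)) t

/-- `S` is a cherry-picking sequence for `t`: every element except the last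
is in a cherry of the restriction of `t` to the not-yet-picked leaves. -/
def IsCPS (t : PTree W) (S : List W) : Prop :=
  ∀ i, i + 1 < S.length →
    ∃ u, restAfter t S i = some u ∧
      ∀ h : i < S.length, ∃ y, cherryPartner (S.get ⟨i, h⟩) u = some y

/-- `S` is a common cherry-picking sequence for `t` and `t'` (in particular
it enumerates the common leaf set). -/
def IsCommonCPS (t t' : PTree W) (S : List W) : Prop :=
  S.Nodup ∧ (∀ x, x ∈ S ↔ x ∈ t.leaves) ∧ IsCPS t S ∧ IsCPS t' S

/-- The weight of a common cherry-picking sequence: the number of positions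
(except the last) at which the cherry partners in the two restrictions
disagree. -/
def wtCPS (t t' : PTree W) (S : List W) : ℕ :=
  (List.range (S.length - 1)).countP fun i =>
    match S[i]?, restAfter t S i, restAfter t' S i with
    | some x, some u, some u' => decide (cherryPartner x u ≠ cherryPartner x u')
    | _, _, _ => false

/-- The ordering on the leaf set induced by the sequence `S`:
`σ (x_i) = n - i + 1` (with `i` one-based). -/
def inducedOrd (S : List W) (x : W) : ℕ :=
  S.length - S.idxOf x

end Phylo
/-! ### Phylogenetic networks, tree-child / temporal networks, display -/

namespace Phylo
open PTree

/-- A finite directed graph with a root and designated leaf vertices, used to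
model rooted binary phylogenetic networks. -/
structure Network (W : Type) where
  V : Type
  [fin : Fintype V]
  [deq : DecidableEq V]
  edge : V → V → Bool
  root : V
  leafOf : W → V

attribute [instance] Network.fin Network.deq

namespace Network

variable {W : Type} [DecidableEq W]

def inDeg (N : Network W) (v : N.V) : ℕ :=
  Fintype.card {u : N.V // N.edge u v = true}

def outDeg (N : Network W) (v : N.V) : ℕ :=
  Fintype.card {u : N.V // N.edge v u = true}

/-- The number of reticulations (in-degree-two vertices). -/
def retCount (N : Network W) : ℕ :=
  Fintype.card {v : N.V // N.inDeg v = 2}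

/-- `N` is a rooted binary phylogenetic network with leaf set `A`. -/
def Wf (N : Network W) (A : Finset W) : Prop :=
  (∀ v : N.V, ¬ Relation.TransGen (fun a b : N.V => N.edge a b = true) v v) ∧
  N.inDeg N.root = 0 ∧ N.outDeg N.root = 1 ∧
  Set.InjOn N.leafOf ↑A ∧
  (∀ x ∈ A, N.inDeg (N.leafOf x) = 1 ∧ N.outDeg (N.leafOf x) = 0) ∧
  (∀ v : N.V, N.outDeg v = 0 → ∃ x ∈ A, v = N.leafOf x) ∧
  (∀ v : N.V, v ≠ N.root → (∀ x ∈ A, v ≠ N.leafOf x) →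
    (N.inDeg v = 1 ∧ N.outDeg v = 2) ∨ (N.inDeg v = 2 ∧ N.outDeg v = 1))

/-- Tree-child: every non-leaf vertex has a child of in-degree one. -/
def TreeChild (N : Network W) : Prop :=
  ∀ v : N.V, N.outDeg v ≠ 0 → ∃ u : N.V, N.edge v u = true ∧ N.inDeg u = 1

/-- Temporal: there is a time map which is constant along reticulation edges
and strictly increasing along tree edges. -/
def Temporal (N : Network W) : Prop :=
  ∃ time : N.V → ℝ, (∀ v, 0 < time v) ∧
    ∀ u v : N.V, N.edge u v = true →
      (N.inDeg v = 2 → time u = time v) ∧ (N.inDeg v = 1 → time u < time v)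

/-- A directed path in `N` from `u` to `v`, with at least one edge. -/
def GoodPath (N : Network W) (l : List N.V) (u v : N.V) : Prop :=
  2 ≤ l.length ∧ l.head? = some u ∧ l.getLast? = some v ∧
    l.Chain' (fun a b => N.edge a b = true)

/-- The interior of a path. -/
def inter {α : Type} (l : List α) : List α := (l.drop 1).dropLast

/-- `N` displays the tree `t`: there is a subtree of `N` which is a
subdivision of `t` (including its root edge).  The vertices of `t` are given
by their positions; edge `e = none` is the root edge and `e = some (p, b)`
the edge from the vertex at `p` to its `b`-child. -/
def Displays (N : Network W) (t : PTree W) : Prop :=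
  ∃ (φ : List Bool → N.V) (P : Option (List Bool × Bool) → List N.V),
    GoodPath N (P none) N.root (φ []) ∧
    (∀ p l r, subAt t p = some (.node l r) →
      GoodPath N (P (some (p, false))) (φ p) (φ (p ++ [false])) ∧
      GoodPath N (P (some (p, true))) (φ p) (φ (p ++ [true]))) ∧
    (∀ x : W, ∀ p, leafPos x t = some p → φ p = N.leafOf x) ∧
    (∀ p q, (subAt t p).isSome → (subAt t q).isSome → φ p = φ q → p = q) ∧
    -- the paths realising distinct tree edges are internally disjoint
    (∀ e e' : Option (List Bool × Bool), e ≠ e' →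
      (∀ pb, e = some pb → ∃ l r, subAt t pb.1 = some (.node l r)) →
      (∀ pb, e' = some pb → ∃ l r, subAt t pb.1 = some (.node l r)) →
      ∀ v ∈ inter (P e), v ∉ P e') ∧
    (∀ e : Option (List Bool × Bool),
      (∀ pb, e = some pb → ∃ l r, subAt t pb.1 = some (.node l r)) →
      ∀ v ∈ inter (P e), ∀ p, (subAt t p).isSome → v ≠ φ p)

end Network

/-- The temporal tree-child hybrid number of `t` and `t'`. -/
noncomputable def hybTemporal (t t' : PTree W) [DecidableEq W] : ℕ :=
  sInf {k | ∃ N : Network W, N.Wf t.labelSet ∧ N.TreeChild ∧ N.Temporal ∧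
    N.Displays t ∧ N.Displays t' ∧ N.retCount = k}

end Phylo
/-! ### Labelled decorations, pendant subtrees, and the reductions -/

namespace Phylo
open PTree

/-- Binary trees in which every vertex carries a label in `α`. -/
inductive DTree (α : Type) where
  | leaf (lbl : α)
  | node (lbl : α) (l r : DTree α)

/-- Label-preserving isomorphism of decorated trees. -/
inductive DIso {α : Type} : DTree α → DTree α → Prop
  | leaf (x : α) : DIso (.leaf x) (.leaf x)
  | node {k : α} {a b c d : DTree α} :
      DIso a c → DIso b d → DIso (.node k a b) (.node k c d)
  | swap {k : α} {a b c d : DTree α} :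
      DIso a d → DIso b c → DIso (.node k a b) (.node k c d)

/-- The HOP labelling of a (rank-labelled) tree: leaves are labelled by their
rank and an internal vertex by the larger of the minimal ranks below its two
children. -/
def hopDec : PTree ℕ → DTree ℕ
  | .leaf x => .leaf x
  | .node l r => .node (max (minLeaf l) (minLeaf r)) (hopDec l) (hopDec r)

/-- The OLA labelling of a (rank-labelled) tree: leaves are labelled by their
rank and an internal vertex by `-j` where `j` is the step at which it was
created (the larger of the minimal ranks below its two children). -/
def olaDec : PTree ℕ → DTree ℤ
  | .leaf x => .leaf (x : ℤ)
  | .node l r => .node (-(max (minLeaf l) (minLeaf r) : ℤ)) (olaDec l) (olaDec r)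

/-- The P2V labelling of the subtree at position `p` of a rank-labelled tree
`t` with `n` leaves (labels read off after the full run of the algorithm). -/
noncomputable def p2vDecAt (t : PTree ℕ) (p : List Bool) : Option (DTree ℕ) :=
  (Option.bind (p2vLabeled t t.leaves.length) (fun lt => LTree.subAtL lt p)).map toD
where
  toD : LTree → DTree ℕ
    | .leaf r => .leaf r
    | .node lbl l r => .node (lbl.getD 0) (toD l) (toD r)

/-- The restriction of a vector to the coordinates whose (one-based) indices
lie in `R` (the coordinates associated with a set of ranks). -/
def restrictVec (v : List ℤ) (R : Finset ℕ) : List ℤ :=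
  (List.range v.length).filterMap fun j =>
    if j + 1 ∈ R then v[j]? else none

variable {W : Type} [DecidableEq W]

/-- `Y` is the label set of a pendant subtree of `t`. -/
def IsPendantSet (t : PTree W) (Y : Finset W) : Prop :=
  ∃ p s, subAt t p = some s ∧ s.labelSet = Y

/-- `Y` carries a common pendant subtree of `t` and `t'`. -/
def IsCommonPendant (t t' : PTree W) (Y : Finset W) : Prop :=
  IsPendantSet t Y ∧ IsPendantSet t' Y ∧
  ∀ u u', restrictF t Y = some u → restrictF t' Y = some u' → Iso u u'

/-- The position of the parent of the leaf labelled `x`. -/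
def parentPos (t : PTree W) (x : W) : List Bool := (pos t x).dropLast

/-- `xs` is a chain of `t`. -/
def IsChain (t : PTree W) (xs : List W) : Prop :=
  3 ≤ xs.length ∧ (∀ x ∈ xs, x ∈ t.leaves) ∧ xs.Nodup ∧
  (∀ (h1 : 0 < xs.length) (h2 : 1 < xs.length),
    parentPos t (xs.get ⟨0, h1⟩) = parentPos t (xs.get ⟨1, h2⟩) ∨
    parentPos t (xs.get ⟨1, h2⟩) = (parentPos t (xs.get ⟨0, h1⟩)).dropLast) ∧
  (∀ i (h : i + 2 < xs.length),
    parentPos t (xs.get ⟨i + 2, h⟩)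
      = (parentPos t (xs.get ⟨i + 1, by omega⟩)).dropLast)

/-- A single application of the subtree reduction, replacing (in both trees)
a maximal common pendant subtree with label set `Y` (with at least two
leaves) by a single new leaf `pnew`. -/
def SubtreeReduction (t t' u u' : PTree W) (Y : Finset W) (pnew : W) : Prop :=
  IsCommonPendant t t' Y ∧ 2 ≤ Y.card ∧
  (∀ Z, IsCommonPendant t t' Z → Y ⊆ Z → Z = Y) ∧
  pnew ∉ t.leaves ∧ pnew ∉ t'.leaves ∧
  (∃ p s, subAt t p = some s ∧ s.labelSet = Y ∧ u = replaceAt t p (.leaf pnew)) ∧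
  (∃ q s', subAt t' q = some s' ∧ s'.labelSet = Y ∧ u' = replaceAt t' q (.leaf pnew))

/-- A single application of the chain reduction, replacing (in both trees) a
maximal common chain `xs` of length at least four by a common chain of length
three on the new labels `c₁, c₂, c₃`. -/
def ChainReduction (t t' u u' : PTree W) (xs : List W) (c₁ c₂ c₃ : W) : Prop :=
  4 ≤ xs.length ∧ IsChain t xs ∧ IsChain t' xs ∧
  (∀ ys, IsChain t ys → IsChain t' ys → xs <:+: ys → ys = xs) ∧
  c₁ ∉ t.leaves ∧ c₂ ∉ t.leaves ∧ c₃ ∉ t.leaves ∧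
  c₁ ≠ c₂ ∧ c₁ ≠ c₃ ∧ c₂ ≠ c₃ ∧
  (∃ u₀ u₀',
    restrict (fun x => decide (x ∉ xs.drop 3)) t = some u₀ ∧
    restrict (fun x => decide (x ∉ xs.drop 3)) t' = some u₀' ∧
    u = u₀.map (chainRen xs c₁ c₂ c₃) ∧ u' = u₀'.map (chainRen xs c₁ c₂ c₃))
where
  chainRen (xs : List W) (c₁ c₂ c₃ : W) (x : W) : W :=
    if xs[0]? = some x then c₁ else if xs[1]? = some x then c₂
    else if xs[2]? = some x then c₃ else x

/-- The elements of `Y` occupy consecutive ranks under `σ`. -/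
def ConsecRanks (σ : W → ℕ) (Y : Finset W) : Prop :=
  ∃ i, Y.image σ = Finset.Ico i (i + Y.card)

end Phylo
/-! ### Polynomial time, NP, and NP-hardness -/

namespace Phylo

/-- Decision problems over binary strings. -/
def Lang : Type := List Bool → Prop

/-- A trivial finite encoding of binary strings. -/
def boolsEnc : Computability.Encoding (List Bool) Bool :=
  ⟨id, some, fun _ => rfl⟩

/-- `f` is computable in polynomial time (by a Turing machine, in the sense
of Mathlib's `Turing.TM2ComputableInPolyTime`). -/
def PolyTimeComputable (f : List Bool → List Bool) : Prop :=
  Nonempty (Turing.TM2ComputableInPolyTime boolsEnc.encode boolsEnc.encode f)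

/-- Polynomial-time many-one reducibility. -/
def Reduces (A B : Lang) : Prop :=
  ∃ f : List Bool → List Bool, PolyTimeComputable f ∧ ∀ x, A x ↔ B (f x)

/-- Pairing of an input with a certificate. -/
def pairEnc (x c : List Bool) : List Bool :=
  (x.flatMap fun b => [true, b]) ++ false :: c

/-- `A` is in NP: membership is certified by certificates of polynomially
bounded length, checkable by a polynomial-time verifier. -/
def InNP (A : Lang) : Prop :=
  ∃ (g : List Bool → List Bool) (q : Polynomial ℕ),
    PolyTimeComputable g ∧
    ∀ x, A x ↔ ∃ c : List Bool,
      c.length ≤ q.eval x.length ∧ g (pairEnc x c) = [true]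

/-- `B` is NP-hard. -/
def NPHard (B : Lang) : Prop := ∀ A, InNP A → Reduces A B

def encNat (k : ℕ) : List Bool := List.replicate k true ++ [false]

def encTree {n : ℕ} : PTree (Fin n) → List Bool
  | .leaf x => false :: encNat x.val
  | .node l r => true :: (encTree l ++ encTree r)

open PTree in
/-- The decision version of computing the HOP measure `d*_HOP`. -/
noncomputable def HOPLang : Lang := fun w =>
  ∃ (n : ℕ) (t t' : PTree (Fin n)) (k : ℕ),
    w = encNat n ++ encTree t ++ encTree t' ++ encNat k ∧
    t.IsPhylo ∧ t'.IsPhylo ∧ t.labelSet = t'.labelSet ∧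
    dHOPstar t t' ≤ k

end Phylo
namespace Phylo
open PTree

section OLAPendantAux

variable {W V : Type}

lemma leaves_map (f : W → V) : ∀ u : PTree W, (u.map f).leaves = u.leaves.map f
  | .leaf x => rfl
  | .node l r => by
      simp [PTree.map, PTree.leaves, leaves_map f l, leaves_map f r]

lemma iso_leaves_perm {a b : PTree W} (h : Iso a b) : a.leaves.Perm b.leaves := by
  induction h with
  | leaf x => exact .refl _
  | node h1 h2 ih1 ih2 => exact ih1.append ih2
  | swap h1 h2 ih1 ih2 => exact (ih1.append ih2).trans List.perm_append_comm

lemma minLeaf_iso {a b : PTree ℕ} (h : Iso a b) : minLeaf a = minLeaf b := by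
  induction h with
  | leaf x => rfl
  | node _ _ ih1 ih2 => simp [minLeaf, ih1, ih2]
  | swap _ _ ih1 ih2 => simp [minLeaf, ih1, ih2, Nat.min_comm]

lemma iso_map (f : W → V) {a b : PTree W} (h : Iso a b) : Iso (a.map f) (b.map f) := by
  induction h with
  | leaf x => exact .leaf _
  | node _ _ ih1 ih2 => exact .node ih1 ih2
  | swap _ _ ih1 ih2 => exact .swap ih1 ih2

lemma iso_leaf_iff {a b : PTree W} (h : Iso a b) (x : W) :
    a = .leaf x ↔ b = .leaf x := by
  cases h with
  | leaf y => simp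
  | node _ _ => simp
  | swap _ _ => simp

lemma olaLabel_iso {a b : PTree ℕ} (h : Iso a b) : olaLabel a = olaLabel b := by
  cases h with
  | leaf x => rfl
  | node h1 h2 => simp [olaLabel, minLeaf_iso h1, minLeaf_iso h2]
  | swap h1 h2 =>
      simp only [olaLabel, minLeaf_iso h1, minLeaf_iso h2]
      rw [sup_comm]

lemma olaDec_iso {a b : PTree ℕ} (h : Iso a b) : DIso (olaDec a) (olaDec b) := by
  induction h with
  | leaf x => exact .leaf _
  | node h1 h2 ih1 ih2 =>
      simp only [olaDec, minLeaf_iso h1, minLeaf_iso h2]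
      exact .node ih1 ih2
  | swap h1 h2 ih1 ih2 =>
      simp only [olaDec, minLeaf_iso h1, minLeaf_iso h2]
      rw [sup_comm]
      exact .swap ih1 ih2

lemma minLeaf_mem : ∀ u : PTree ℕ, minLeaf u ∈ u.leaves
  | .leaf x => by simp [minLeaf, PTree.leaves]
  | .node l r => by
      simp only [minLeaf, PTree.leaves, List.mem_append]
      rcases le_total (minLeaf l) (minLeaf r) with h | h
      · left; rw [min_eq_left h]; exact minLeaf_mem l
      · right; rw [min_eq_right h]; exact minLeaf_mem r

lemma minLeaf_le : ∀ (u : PTree ℕ) (x : ℕ), x ∈ u.leaves → minLeaf u ≤ x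
  | .leaf y, x, h => by
      simp [PTree.leaves] at h
      simp [minLeaf, h]
  | .node l r, x, h => by
      simp only [PTree.leaves, List.mem_append] at h
      simp only [minLeaf]
      rcases h with h | h
      · exact le_trans (min_le_left _ _) (minLeaf_le l x h)
      · exact le_trans (min_le_right _ _) (minLeaf_le r x h)

lemma restrict_spec (f : W → Bool) :
    ∀ u : PTree W,
      (∀ w, restrict f u = some w → w.leaves = u.leaves.filter f) ∧
      (restrict f u = none → u.leaves.filter f = []) := by
  intro u
  induction u with
  | leaf x =>
      by_cases h : f x
      · constructor
        · intro w hw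
          simp [restrict, h] at hw
          subst hw
          simp [PTree.leaves, h]
        · intro hw; simp [restrict, h] at hw
      · constructor
        · intro w hw; simp [restrict, h] at hw
        · intro _
          simp [PTree.leaves, List.filter_cons, h]
  | node l r ihl ihr =>
      obtain ⟨ihl1, ihl2⟩ := ihl
      obtain ⟨ihr1, ihr2⟩ := ihr
      rcases h1 : restrict f l with _ | a <;> rcases h2 : restrict f r with _ | b
      · constructor
        · intro w hw; simp [restrict, h1, h2] at hw
        · intro _
          simp [PTree.leaves, List.filter_append, ihl2 h1, ihr2 h2]
      · constructor
        · intro w hw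
          simp [restrict, h1, h2] at hw
          subst hw
          simp [PTree.leaves, List.filter_append, ihl2 h1, ihr1 b h2]
        · intro hw; simp [restrict, h1, h2] at hw
      · constructor
        · intro w hw
          simp [restrict, h1, h2] at hw
          subst hw
          simp [PTree.leaves, List.filter_append, ihl1 a h1, ihr2 h2]
        · intro hw; simp [restrict, h1, h2] at hw
      · constructor
        · intro w hw
          simp [restrict, h1, h2] at hw
          subst hw
          simp [PTree.leaves, List.filter_append, ihl1 a h1, ihr1 b h2]
        · intro hw; simp [restrict, h1, h2] at hw

lemma sibling_eq_none [DecidableEq W] (i : W) :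
    ∀ u : PTree W, i ∉ u.leaves → sibling i u = none := by
  intro u
  induction u with
  | leaf x => intro _; rfl
  | node l r ihl ihr =>
      intro h
      simp only [PTree.leaves, List.mem_append, not_or] at h
      have hl : l ≠ .leaf i := by
        rintro rfl; exact h.1 (by simp [PTree.leaves])
      have hr : r ≠ .leaf i := by
        rintro rfl; exact h.2 (by simp [PTree.leaves])
      simp [sibling, hl, hr, ihl h.1, ihr h.2]

lemma mem_of_sibling_some [DecidableEq W] (i : W) {u v : PTree W}
    (h : sibling i u = some v) : i ∈ u.leaves := by
  by_contra hmem
  rw [sibling_eq_none i u hmem] at h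
  cases h

lemma sibling_some_not_leaf [DecidableEq W] (i : W) {u v : PTree W}
    (h : sibling i u = some v) : ∀ x, u ≠ .leaf x := by
  rintro x rfl
  simp [sibling] at h

lemma sibling_isSome [DecidableEq W] (i : W) :
    ∀ u : PTree W, (∀ x, u ≠ .leaf x) → i ∈ u.leaves → (sibling i u).isSome := by
  intro u
  induction u with
  | leaf x => intro h _; exact absurd rfl (h x)
  | node l r ihl ihr =>
      intro _ hmem
      by_cases hl : l = PTree.leaf i
      · simp [sibling, hl]
      by_cases hr : r = PTree.leaf i
      · simp [sibling, hl, hr]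
      simp only [PTree.leaves, List.mem_append] at hmem
      rcases hmem with hmem | hmem
      · have hlnl : ∀ x, l ≠ PTree.leaf x := by
          rintro x rfl
          simp [PTree.leaves] at hmem
          exact hl (by rw [hmem])
        have := ihl hlnl hmem
        obtain ⟨w, hw⟩ := Option.isSome_iff_exists.1 this
        simp [sibling, hl, hr, hw]
      · rcases hsl : sibling i l with _ | w
        · have hrnl : ∀ x, r ≠ PTree.leaf x := by
            rintro x rfl
            simp [PTree.leaves] at hmem
            exact hr (by rw [hmem])
          have := ihr hrnl hmem
          obtain ⟨w, hw⟩ := Option.isSome_iff_exists.1 this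
          simp [sibling, hl, hr, hsl, hw]
        · simp [sibling, hl, hr, hsl]

lemma not_mem_of_sibling_none [DecidableEq W] (i : W) {u : PTree W}
    (h : sibling i u = none) (hne : u ≠ .leaf i) : i ∉ u.leaves := by
  intro hmem
  cases u with
  | leaf x =>
      simp [PTree.leaves] at hmem
      exact hne (by rw [hmem])
  | node l r =>
      have := sibling_isSome i (.node l r) (by rintro x ⟨⟩) hmem
      rw [h] at this
      exact Bool.noConfusion this

lemma sibling_iso [DecidableEq W] (i : W) {a b : PTree W} (h : Iso a b) :
    a.leaves.Nodup → ∀ v, sibling i a = some v →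
      ∃ v', sibling i b = some v' ∧ Iso v v' := by
  induction h with
  | leaf x => intro _ v hv; simp [sibling] at hv
  | node h1 h2 ih1 ih2 =>
      rename_i a b c d
      intro hnd v hv
      simp only [PTree.leaves, List.nodup_append] at hnd
      by_cases ha : a = PTree.leaf i
      · simp only [sibling, if_pos ha, Option.some.injEq] at hv
        subst hv
        have hc : c = PTree.leaf i := (iso_leaf_iff h1 i).1 ha
        exact ⟨d, by simp [sibling, hc], h2⟩
      by_cases hb : b = PTree.leaf i
      · simp only [sibling, if_neg ha, if_pos hb, Option.some.injEq] at hv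
        subst hv
        have hc : c ≠ PTree.leaf i := fun hh => ha ((iso_leaf_iff h1 i).2 hh)
        have hd : d = PTree.leaf i := (iso_leaf_iff h2 i).1 hb
        exact ⟨c, by simp [sibling, hc, hd], h1⟩
      have hc : c ≠ PTree.leaf i := fun hh => ha ((iso_leaf_iff h1 i).2 hh)
      have hd : d ≠ PTree.leaf i := fun hh => hb ((iso_leaf_iff h2 i).2 hh)
      rcases hsa : sibling i a with _ | w
      · simp only [sibling, if_neg ha, if_neg hb, hsa] at hv
        obtain ⟨v', hv', hiso⟩ := ih2 hnd.2.1 v hv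
        have hna : i ∉ a.leaves := not_mem_of_sibling_none i hsa ha
        have hnc : i ∉ c.leaves := fun hh => hna ((iso_leaves_perm h1).mem_iff.2 hh)
        refine ⟨v', ?_, hiso⟩
        simp [sibling, hc, hd, sibling_eq_none i c hnc, hv']
      · simp only [sibling, if_neg ha, if_neg hb, hsa, Option.some.injEq] at hv
        subst hv
        obtain ⟨v', hv', hiso⟩ := ih1 hnd.1 w hsa
        exact ⟨v', by simp [sibling, hc, hd, hv'], hiso⟩
  | swap h1 h2 ih1 ih2 =>
      rename_i a b c d
      intro hnd v hv
      simp only [PTree.leaves, List.nodup_append] at hnd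
      by_cases ha : a = PTree.leaf i
      · have hd : d = PTree.leaf i := (iso_leaf_iff h1 i).1 ha
        have hc : c ≠ PTree.leaf i := by
          rintro rfl
          have hia : i ∈ a.leaves := by rw [ha]; simp [PTree.leaves]
          have hib : i ∈ b.leaves := (iso_leaves_perm h2).mem_iff.2 (by simp [PTree.leaves])
          exact hnd.2.2 i hia i hib rfl
        simp only [sibling, if_pos ha, Option.some.injEq] at hv
        subst hv
        exact ⟨c, by simp [sibling, hc, hd], h2⟩
      by_cases hb : b = PTree.leaf i
      · simp only [sibling, if_neg ha, if_pos hb, Option.some.injEq] at hv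
        subst hv
        have hc : c = PTree.leaf i := (iso_leaf_iff h2 i).1 hb
        exact ⟨d, by simp [sibling, hc], h1⟩
      have hd : d ≠ PTree.leaf i := fun hh => ha ((iso_leaf_iff h1 i).2 hh)
      have hc : c ≠ PTree.leaf i := fun hh => hb ((iso_leaf_iff h2 i).2 hh)
      rcases hsa : sibling i a with _ | w
      · simp only [sibling, if_neg ha, if_neg hb, hsa] at hv
        obtain ⟨v', hv', hiso⟩ := ih2 hnd.2.1 v hv
        exact ⟨v', by simp [sibling, hc, hd, hv'], hiso⟩
      · simp only [sibling, if_neg ha, if_neg hb, hsa, Option.some.injEq] at hv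
        subst hv
        obtain ⟨v', hv', hiso⟩ := ih1 hnd.1 w hsa
        have hia : i ∈ a.leaves := mem_of_sibling_some i hsa
        have hnb : i ∉ b.leaves := fun hh => hnd.2.2 i hia i hh rfl
        have hnc : i ∉ c.leaves := fun hh => hnb ((iso_leaves_perm h2).mem_iff.2 hh)
        refine ⟨v', ?_, hiso⟩
        simp [sibling, hc, hd, sibling_eq_none i c hnc, hv']

lemma restrict_iso (f : W → Bool) {a b : PTree W} (h : Iso a b) :
    (restrict f a = none ∧ restrict f b = none) ∨
      ∃ a' b', restrict f a = some a' ∧ restrict f b = some b' ∧ Iso a' b' := by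
  induction h with
  | leaf x =>
      by_cases hf : f x
      · exact Or.inr ⟨_, _, by simp [restrict, hf], by simp [restrict, hf], .leaf x⟩
      · exact Or.inl ⟨by simp [restrict, hf], by simp [restrict, hf]⟩
  | node h1 h2 ih1 ih2 =>
      rename_i a b c d
      rcases ih1 with ⟨e1, e2⟩ | ⟨a', c', ha, hc, hic⟩ <;>
        rcases ih2 with ⟨e3, e4⟩ | ⟨b', d', hbb, hd, hid⟩
      · exact Or.inl ⟨by simp [restrict, e1, e3], by simp [restrict, e2, e4]⟩
      · exact Or.inr ⟨b', d', by simp [restrict, e1, hbb], by simp [restrict, e2, hd], hid⟩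
      · exact Or.inr ⟨a', c', by simp [restrict, ha, e3], by simp [restrict, hc, e4], hic⟩
      · exact Or.inr ⟨.node a' b', .node c' d', by simp [restrict, ha, hbb],
          by simp [restrict, hc, hd], .node hic hid⟩
  | swap h1 h2 ih1 ih2 =>
      rename_i a b c d
      rcases ih1 with ⟨e1, e2⟩ | ⟨a', d', ha, hd, hiad⟩ <;>
        rcases ih2 with ⟨e3, e4⟩ | ⟨b', c', hbb, hc, hibc⟩
      · exact Or.inl ⟨by simp [restrict, e1, e3], by simp [restrict, e4, e2]⟩
      · exact Or.inr ⟨b', c', by simp [restrict, e1, hbb], by simp [restrict, hc, e2], hibc⟩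
      · exact Or.inr ⟨a', d', by simp [restrict, ha, e3], by simp [restrict, e4, hd], hiad⟩
      · exact Or.inr ⟨.node a' b', .node c' d', by simp [restrict, ha, hbb],
          by simp [restrict, hc, hd], .swap hiad hibc⟩

lemma subAt_leaves_sublist :
    ∀ (P : List Bool) (u v : PTree W), subAt u P = some v → v.leaves.Sublist u.leaves := by
  intro P
  induction P with
  | nil =>
      intro u v h
      simp [subAt] at h
      subst h
      exact List.Sublist.refl _
  | cons b P ih =>
      intro u v h
      cases u with
      | leaf x => cases b <;> simp [subAt] at h
      | node l r =>
          cases b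
          · have h' : subAt l P = some v := by simpa [subAt] using h
            exact (ih l v h').trans (List.sublist_append_left _ _)
          · have h' : subAt r P = some v := by simpa [subAt] using h
            exact (ih r v h').trans (List.sublist_append_right _ _)

lemma subAt_map (f : W → V) :
    ∀ (P : List Bool) (u : PTree W),
      subAt (u.map f) P = (subAt u P).map (PTree.map f) := by
  intro P
  induction P with
  | nil => intro u; simp [subAt]
  | cons b P ih =>
      intro u
      cases u with
      | leaf x => cases b <;> simp [subAt, PTree.map]
      | node l r => cases b <;> simp [PTree.map, subAt, ih]

lemma sibling_restrict_subAt (f : ℕ → Bool) (i : ℕ) :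
    ∀ (P : List Bool) (u v vr w : PTree ℕ), u.leaves.Nodup → subAt u P = some v →
      restrict f v = some vr → sibling i vr = some w → i ∈ vr.leaves →
      ∃ ur, restrict f u = some ur ∧ sibling i ur = some w := by
  intro P
  induction P with
  | nil =>
      intro u v vr w _ hsub hres hsib _
      simp [subAt] at hsub
      subst hsub
      exact ⟨vr, hres, hsib⟩
  | cons b P ih =>
      intro u v vr w hnd hsub hres hsib hmem
      cases u with
      | leaf x => cases b <;> simp [subAt] at hsub
      | node l r =>
          simp only [PTree.leaves, List.nodup_append] at hnd
          have hvmem : i ∈ v.leaves := by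
            have := (restrict_spec f v).1 vr hres
            rw [this] at hmem
            exact (List.mem_filter.1 hmem).1
          cases b
          · have hsub' : subAt l P = some v := by simpa [subAt] using hsub
            obtain ⟨tr, h1, h2⟩ := ih l v vr w hnd.1 hsub' hres hsib hmem
            have hil : i ∈ l.leaves := (subAt_leaves_sublist P l v hsub').subset hvmem
            have hirn : i ∉ r.leaves := fun hh => hnd.2.2 i hil i hh rfl
            rcases hr : restrict f r with _ | rr
            · exact ⟨tr, by simp [restrict, h1, hr], h2⟩
            · refine ⟨.node tr rr, by simp [restrict, h1, hr], ?_⟩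
              have htrne : tr ≠ PTree.leaf i := sibling_some_not_leaf i h2 i
              have hrrne : rr ≠ PTree.leaf i := by
                rintro rfl
                have := (restrict_spec f r).1 _ hr
                have : i ∈ r.leaves.filter f := by
                  rw [← this]; simp [PTree.leaves]
                exact hirn (List.mem_filter.1 this).1
              simp [sibling, htrne, hrrne, h2]
          · have hsub' : subAt r P = some v := by simpa [subAt] using hsub
            obtain ⟨tr, h1, h2⟩ := ih r v vr w hnd.2.1 hsub' hres hsib hmem
            have hir : i ∈ r.leaves := (subAt_leaves_sublist P r v hsub').subset hvmem
            have hiln : i ∉ l.leaves := fun hh => hnd.2.2 i hh i hir rfl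
            rcases hl : restrict f l with _ | lr
            · exact ⟨tr, by simp [restrict, hl, h1], h2⟩
            · refine ⟨.node lr tr, by simp [restrict, hl, h1], ?_⟩
              have htrne : tr ≠ PTree.leaf i := sibling_some_not_leaf i h2 i
              have hlrne : lr ≠ PTree.leaf i := by
                rintro rfl
                have := (restrict_spec f l).1 _ hl
                have : i ∈ l.leaves.filter f := by
                  rw [← this]; simp [PTree.leaves]
                exact hiln (List.mem_filter.1 this).1
              have hlrn : i ∉ lr.leaves := by
                intro hh
                rw [(restrict_spec f l).1 _ hl] at hh
                exact hiln (List.mem_filter.1 hh).1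
              simp [sibling, hlrne, htrne, sibling_eq_none i lr hlrn, h2]

lemma olaCoord_eq' {u ur w : PTree ℕ} {i : ℕ} (f : ℕ → Bool)
    (hfeq : f = fun x => decide (x ≤ i))
    (h1 : restrict f u = some ur) (h2 : sibling i ur = some w) :
    olaCoord u i = olaLabel w := by
  subst hfeq
  simp [olaCoord, h1, h2]

/-- The key pointwise fact: coordinates associated with non-minimal leaves of a
common pendant subtree agree. -/
lemma olaCoord_pendant_eq
    {t t' s s' : PTree ℕ} {p q : List Bool}
    (hnd : t.leaves.Nodup) (hnd' : t'.leaves.Nodup)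
    (hs : subAt t p = some s) (hs' : subAt t' q = some s')
    (hIso : Iso s s') (i : ℕ) (hi : i ∈ s.leaves) (hne : i ≠ minLeaf s) :
    olaCoord t i = olaCoord t' i := by
  set f : ℕ → Bool := fun x => decide (x ≤ i) with hf
  have hm : minLeaf s ∈ s.leaves := minLeaf_mem s
  have hmle : minLeaf s ≤ i := minLeaf_le s i hi
  have hnds : s.leaves.Nodup := (subAt_leaves_sublist p t s hs).nodup hnd
  obtain ⟨sr, hsr⟩ : ∃ sr, restrict f s = some sr := by
    rcases hres : restrict f s with _ | sr
    · exfalso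
      have hnil := (restrict_spec f s).2 hres
      have hmemf : i ∈ s.leaves.filter f := List.mem_filter.2 ⟨hi, by simp [hf]⟩
      rw [hnil] at hmemf
      exact List.not_mem_nil hmemf
    · exact ⟨sr, rfl⟩
  have hsrl : sr.leaves = s.leaves.filter f := (restrict_spec f s).1 sr hsr
  have hisr : i ∈ sr.leaves := by
    rw [hsrl]; exact List.mem_filter.2 ⟨hi, by simp [hf]⟩
  have hmsr : minLeaf s ∈ sr.leaves := by
    rw [hsrl]; exact List.mem_filter.2 ⟨hm, by simp [hf, hmle]⟩
  have hsrnode : ∀ x, sr ≠ PTree.leaf x := by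
    rintro x rfl
    simp [PTree.leaves] at hisr hmsr
    exact hne (hisr.trans hmsr.symm)
  obtain ⟨v, hv⟩ := Option.isSome_iff_exists.1 (sibling_isSome i sr hsrnode hisr)
  obtain ⟨tr, htr, hsib⟩ := sibling_restrict_subAt f i p t s sr v hnd hs hsr hv hisr
  rcases restrict_iso f hIso with ⟨e1, _⟩ | ⟨sr₁, sr', hsr₁, hsr', hIsoR⟩
  · rw [hsr] at e1; cases e1
  · rw [hsr] at hsr₁
    have heq : sr = sr₁ := Option.some.inj hsr₁
    rw [← heq] at hIsoR
    have hndsr : sr.leaves.Nodup := hsrl ▸ hnds.filter f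
    obtain ⟨v', hv', hIsov⟩ := sibling_iso i hIsoR hndsr v hv
    have hisr' : i ∈ sr'.leaves := (iso_leaves_perm hIsoR).mem_iff.1 hisr
    obtain ⟨tr', htr', hsib'⟩ :=
      sibling_restrict_subAt f i q t' s' sr' v' hnd' hs' hsr' hv' hisr'
    rw [olaCoord_eq' f hf htr hsib, olaCoord_eq' f hf htr' hsib']
    exact olaLabel_iso hIsov

lemma length_le_one_of_all_eq {α : Type _} {l : List α} (h : l.Nodup) (a : α)
    (ha : ∀ x ∈ l, x = a) : l.length ≤ 1 := by
  cases l with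
  | nil => simp
  | cons x xs =>
      cases xs with
      | nil => simp
      | cons y ys =>
          exfalso
          have hx := ha x (by simp)
          have hy := ha y (by simp)
          rw [List.nodup_cons] at h
          exact h.1 (by simp [hx, hy])

lemma hamming_le_one_of {L : List ℕ} (hnd : L.Nodup) (F F' : ℕ → ℤ) (c : ℕ)
    (h : ∀ j ∈ L, F j ≠ F' j → j = c) :
    hamming (L.map F) (L.map F') ≤ 1 := by
  unfold hamming
  rw [List.zip_map', List.countP_map]
  calc List.countP ((fun p => decide (p.1 ≠ p.2)) ∘ fun j => (F j, F' j)) L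
      ≤ List.countP (fun j => decide (j = c)) L := by
        apply List.countP_mono_left
        intro j hj hd
        simp only [Function.comp_apply, decide_eq_true_eq] at hd ⊢
        exact h j hj hd
    _ ≤ 1 := by
        rw [List.countP_eq_length_filter]
        refine length_le_one_of_all_eq (hnd.filter _) c ?_
        intro x hx
        simpa using (List.mem_filter.1 hx).2

lemma filterMap_if {α β : Type _} (p : α → Prop) [DecidablePred p] (g : α → β) :
    ∀ L : List α,
      (L.filterMap fun j => if p j then some (g j) else none)
        = (L.filter fun j => decide (p j)).map g := by
  intro L
  induction L with
  | nil => rfl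
  | cons a L ih => by_cases h : p a <;> simp [h, ih]

lemma restrictVec_eq (F : ℕ → ℤ) (n : ℕ) (R : Finset ℕ) :
    restrictVec ((List.range n).map F) R
      = ((List.range n).filter fun j => decide (j + 1 ∈ R)).map F := by
  unfold restrictVec
  rw [List.length_map, List.length_range]
  rw [List.filterMap_congr (g := fun j => if j + 1 ∈ R then some (F j) else none) ?_]
  · exact filterMap_if (fun j => j + 1 ∈ R) F _
  · intro j hj
    rw [List.getElem?_map, List.getElem?_range (List.mem_range.1 hj)]
    rfl

end OLAPendantAux

/-- If `T` and `T'` have a common pendant subtree `S`, then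
the OLA labelling of `S` under `σ` is identical in `T` and `T'`, and the OLA
vectors restricted to the coordinates associated with the leaves of `S` have
Hamming distance at most `1`. -/
theorem ola_labeling_of_common_pendant {W : Type} [DecidableEq W]
    (t t' : PTree W) (σ : W → ℕ)
    (ht : t.IsPhylo) (ht' : t'.IsPhylo) (hlab : t.labelSet = t'.labelSet)
    (hσ : IsOrd t σ)
    (p q : List Bool) (s s' : PTree W)
    (hs : subAt t p = some s) (hs' : subAt t' q = some s')
    (hcommon : Iso s s') :
    DIso (olaDec (s.map σ)) (olaDec (s'.map σ)) ∧
    hamming (restrictVec (olaVec (t.map σ)) (s.labelSet.image σ))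
        (restrictVec (olaVec (t'.map σ)) (s.labelSet.image σ)) ≤ 1 := by
  classical
  have hssIso : Iso (s.map σ) (s'.map σ) := iso_map σ hcommon
  have hinj : Set.InjOn σ ↑t.labelSet := hσ.injOn
  have hnd_ts : (t.map σ).leaves.Nodup := by
    rw [leaves_map]
    refine List.Nodup.map_on ?_ ht
    intro x hx y hy hxy
    exact hinj (by simp [PTree.labelSet, List.mem_toFinset, hx])
      (by simp [PTree.labelSet, List.mem_toFinset, hy]) hxy
  have hnd_ts' : (t'.map σ).leaves.Nodup := by
    rw [leaves_map]
    refine List.Nodup.map_on ?_ ht'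
    intro x hx y hy hxy
    refine hinj ?_ ?_ hxy <;> rw [hlab] <;>
      simp [PTree.labelSet, List.mem_toFinset, hx, hy]
  refine ⟨olaDec_iso hssIso, ?_⟩
  -- lengths
  set n := t.leaves.length with hn
  have hlen' : t'.leaves.length = n := by
    have h1 : t.labelSet.card = t.leaves.length := List.toFinset_card_of_nodup ht
    have h2 : t'.labelSet.card = t'.leaves.length := List.toFinset_card_of_nodup ht'
    rw [← h2, ← hlab, h1]
  have hlt : (t.map σ).leaves.length = n := by rw [leaves_map, List.length_map]
  have hlt' : (t'.map σ).leaves.length = n := by rw [leaves_map, List.length_map, hlen']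
  set R : Finset ℕ := s.labelSet.image σ with hR
  set F : ℕ → ℤ := fun j =>
    if j = 0 then 0 else if j = 1 then 1 else olaCoord (t.map σ) (j + 1) with hF
  set F' : ℕ → ℤ := fun j =>
    if j = 0 then 0 else if j = 1 then 1 else olaCoord (t'.map σ) (j + 1) with hF'
  have hvec : olaVec (t.map σ) = (List.range n).map F := by
    rw [olaVec, hlt]
  have hvec' : olaVec (t'.map σ) = (List.range n).map F' := by
    rw [olaVec, hlt']
  rw [hvec, hvec', restrictVec_eq, restrictVec_eq]
  set mS := minLeaf (s.map σ) with hmS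
  refine hamming_le_one_of ((List.nodup_range (n := n)).filter _) F F' (mS - 1) ?_
  intro j hj hFF
  have hjR : j + 1 ∈ R := by
    have := (List.mem_filter.1 hj).2
    simpa using this
  by_contra hjc
  apply hFF
  have hne : j + 1 ≠ mS := by omega
  by_cases h0 : j = 0
  · simp [hF, hF', h0]
  by_cases h1 : j = 1
  · simp [hF, hF', h1]
  simp only [hF, hF', if_neg h0, if_neg h1]
  have hsmap : subAt (t.map σ) p = some (s.map σ) := by
    rw [subAt_map, hs]; rfl
  have hsmap' : subAt (t'.map σ) q = some (s'.map σ) := by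
    rw [subAt_map, hs']; rfl
  have hi : j + 1 ∈ (s.map σ).leaves := by
    rw [leaves_map]
    rw [hR] at hjR
    obtain ⟨x, hx, hxeq⟩ := Finset.mem_image.1 hjR
    exact List.mem_map.2 ⟨x, by simpa [PTree.labelSet, List.mem_toFinset] using hx, hxeq⟩
  exact olaCoord_pendant_eq hnd_ts hnd_ts' hsmap hsmap' hssIso (j + 1) hi hne

end Phylo
end

section
/- Let T be a rooted binary phylogenetic X-tree with |X| = n and let S = (x₁, x₂, …, x_n) be a cherry-picking sequence for T. Let σ be the ordering induced by S, i.e., σ(x_i) = n − i + 1. Then the OLA vector of T under σ equals the P2V vector of T under σ. -/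
namespace Phylo
open PTree

/-! #### Auxiliary lemmas for Statement 10 -/

lemma leaves_map' {W V : Type} (f : W → V) (t : PTree W) :
    (t.map f).leaves = t.leaves.map f := by
  induction t with
  | leaf x => rfl
  | node l r ihl ihr => simp [PTree.map, leaves, ihl, ihr]

lemma restrict_congr' {W : Type} (p q : W → Bool) (t : PTree W)
    (h : ∀ a ∈ t.leaves, p a = q a) : restrict p t = restrict q t := by
  induction t with
  | leaf x => simp [restrict, h x (by simp [leaves])]
  | node l r ihl ihr =>
    simp only [restrict,
      ihl (fun a ha => h a (by simp [leaves, ha])),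
      ihr (fun a ha => h a (by simp [leaves, ha]))]

lemma restrict_map' {W V : Type} (f : W → V) (p : V → Bool) (t : PTree W) :
    restrict p (t.map f) = Option.map (PTree.map f) (restrict (fun a => p (f a)) t) := by
  induction t with
  | leaf x => by_cases h : p (f x) <;> simp [PTree.map, restrict, h]
  | node l r ihl ihr =>
    simp only [PTree.map, restrict, ihl, ihr]
    cases restrict (fun a => p (f a)) l <;> cases restrict (fun a => p (f a)) r <;>
      simp [PTree.map]

lemma leaves_restrict_subset' {W : Type} (p : W → Bool) (t u : PTree W)
    (h : restrict p t = some u) : ∀ a ∈ u.leaves, a ∈ t.leaves := by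
  induction t generalizing u with
  | leaf x =>
    simp only [restrict] at h
    by_cases hp : p x
    · rw [if_pos hp] at h; cases h; intro a ha; exact ha
    · rw [if_neg hp] at h; cases h
  | node l r ihl ihr =>
    simp only [restrict] at h
    rcases hl : restrict p l with _ | a <;> rcases hr : restrict p r with _ | b <;>
      rw [hl, hr] at h
    · cases h
    · cases h; intro a ha; simp only [leaves, List.mem_append]
      exact Or.inr (ihr _ hr _ ha)
    · cases h; intro a ha; simp only [leaves, List.mem_append]
      exact Or.inl (ihl _ hl _ ha)
    · cases h; intro c hc
      simp only [leaves, List.mem_append] at hc ⊢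
      rcases hc with hc | hc
      · exact Or.inl (ihl _ hl _ hc)
      · exact Or.inr (ihr _ hr _ hc)

lemma sibling_map' {W V : Type} [DecidableEq W] [DecidableEq V]
    (f : W → V) (x : W) (t : PTree W)
    (hinj : ∀ a ∈ t.leaves, f a = f x → a = x) :
    sibling (f x) (t.map f) = Option.map (PTree.map f) (sibling x t) := by
  induction t with
  | leaf a => simp [PTree.map, sibling]
  | node l r ihl ihr =>
    have key : ∀ s : PTree W, (∀ a ∈ s.leaves, f a = f x → a = x) →
        ((s.map f = PTree.leaf (f x)) ↔ (s = PTree.leaf x)) := by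
      intro s hs
      constructor
      · intro h
        cases s with
        | leaf a =>
          simp only [PTree.map, PTree.leaf.injEq] at h
          rw [hs a (by simp [leaves]) h]
        | node _ _ => simp [PTree.map] at h
      · intro h; rw [h]; rfl
    have hl := key l (fun a ha => hinj a (by simp [leaves, ha]))
    have hr := key r (fun a ha => hinj a (by simp [leaves, ha]))
    simp only [PTree.map, sibling]
    by_cases h1 : l = PTree.leaf x
    · rw [if_pos (hl.mpr h1), if_pos h1]; rfl
    · rw [if_neg (fun h => h1 (hl.mp h)), if_neg h1]
      by_cases h2 : r = PTree.leaf x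
      · rw [if_pos (hr.mpr h2), if_pos h2]; rfl
      · rw [if_neg (fun h => h2 (hr.mp h)), if_neg h2]
        rw [ihl (fun a ha => hinj a (by simp [leaves, ha])),
            ihr (fun a ha => hinj a (by simp [leaves, ha]))]
        cases sibling x l <;> simp

/-- Forget the internal labels of an `LTree`. -/
def eraseL : LTree → PTree ℕ
  | .leaf r => .leaf r
  | .node _ l r => .node (eraseL l) (eraseL r)

lemma eraseL_ofPTree (t : PTree ℕ) : eraseL (LTree.ofPTree t) = t := by
  induction t with
  | leaf x => rfl
  | node l r ihl ihr => simp [LTree.ofPTree, eraseL, ihl, ihr]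

lemma eraseL_setLbl (j : ℕ) (t : LTree) (p : List Bool) :
    eraseL (t.setLbl j p) = eraseL t := by
  induction t generalizing p with
  | leaf r => cases p <;> rfl
  | node lbl l r ihl ihr =>
    cases p with
    | nil => rfl
    | cons b p => cases b <;> simp [LTree.setLbl, eraseL, ihl, ihr]

lemma eraseL_step (j : ℕ) (t : LTree) : eraseL (LTree.step j t) = eraseL t := by
  unfold LTree.step
  cases List.argmax Prod.snd t.cands with
  | none => rfl
  | some c => exact eraseL_setLbl j t c.1

lemma eraseL_run (k : ℕ) : ∀ (j : ℕ) (t : LTree), eraseL (LTree.run k j t) = eraseL t := by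
  induction k with
  | zero => intro j t; rfl
  | succ k ih => intro j t; rw [LTree.run, ih, eraseL_step]

lemma sibling_eraseL (i : ℕ) (t : LTree) :
    sibling i (eraseL t) = Option.map eraseL (LTree.siblingL i t) := by
  induction t with
  | leaf r => simp [eraseL, sibling, LTree.siblingL]
  | node lbl l r ihl ihr =>
    have key : ∀ s : LTree, (eraseL s = PTree.leaf i) ↔ (s = LTree.leaf i) := by
      intro s
      cases s with
      | leaf a => simp [eraseL]
      | node _ _ _ => simp [eraseL]
    simp only [eraseL, sibling, LTree.siblingL]
    by_cases h1 : l = LTree.leaf i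
    · rw [if_pos ((key l).mpr h1), if_pos h1]; rfl
    · rw [if_neg (fun h => h1 ((key l).mp h)), if_neg h1]
      by_cases h2 : r = LTree.leaf i
      · rw [if_pos ((key r).mpr h2), if_pos h2]; rfl
      · rw [if_neg (fun h => h2 ((key r).mp h)), if_neg h2]
        rw [ihl, ihr]
        cases LTree.siblingL i l <;> simp

lemma mem_take_iff_indexOf_lt {W : Type} [DecidableEq W] (S : List W) (a : W)
    (ha : a ∈ S) : ∀ k : ℕ, (a ∈ S.take k ↔ S.idxOf a < k) := by
  induction S with
  | nil => cases ha
  | cons b rest ih =>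
    intro k
    cases k with
    | zero => simp
    | succ k =>
      by_cases hab : a = b
      · subst hab
        simp [List.take_succ_cons, List.idxOf_cons_self]
      · have ha' : a ∈ rest := by
          rcases List.mem_cons.mp ha with h | h
          · exact absurd h hab
          · exact h
        simp only [List.take_succ_cons, List.mem_cons, hab, false_or]
        rw [ih ha' k, List.idxOf_cons_ne _ (fun h => hab h.symm)]
        omega

/-- If `S` is a cherry-picking sequence for `T` and `σ`
the ordering induced by `S`, then the OLA and P2V vectors of `T` under `σ`
coincide. -/
theorem olaVec_eq_p2vVec_of_cps {W : Type} [DecidableEq W]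
    (t : PTree W) (S : List W) (ht : t.IsPhylo)
    (hnd : S.Nodup) (henum : ∀ x, x ∈ S ↔ x ∈ t.leaves)
    (hcps : IsCPS t S) :
    olaVec (t.map (inducedOrd S)) = p2vVec (t.map (inducedOrd S)) := by
  set σ := inducedOrd S with hσ
  set n := S.length with hn
  have hperm : S.Perm t.leaves := (List.perm_ext_iff_of_nodup hnd ht).mpr henum
  have hlen : t.leaves.length = n := hperm.length_eq.symm
  have hidx : ∀ a ∈ S, S.idxOf a < n := fun a ha => List.idxOf_lt_length_iff.mpr ha
  have hσdef : ∀ a, σ a = n - S.idxOf a := fun a => rfl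
  have hinjS : ∀ a ∈ S, ∀ b ∈ S, σ a = σ b → a = b := by
    intro a ha b hb hab
    have h1 := hidx a ha; have h2 := hidx b hb
    have heq : S.idxOf a = S.idxOf b := by
      rw [hσdef, hσdef] at hab; omega
    calc a = S.get ⟨S.idxOf a, h1⟩ := (List.idxOf_get h1).symm
      _ = S.get ⟨S.idxOf b, h2⟩ := by congr 1; exact Fin.ext heq
      _ = b := List.idxOf_get h2
  have hcoord : ∀ i, 3 ≤ i → i ≤ n → olaCoord (t.map σ) i = p2vCoord (t.map σ) i := by
    intro i h3 hin
    set j := n - i with hj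
    have hj1 : j + 1 < S.length := by omega
    obtain ⟨u, hu, hpart⟩ := hcps j hj1
    have hjlt : j < S.length := by omega
    obtain ⟨y, hy⟩ := hpart hjlt
    set x := S.get ⟨j, hjlt⟩ with hxdef
    have hxmem : x ∈ S := List.get_mem _ _
    have hidxx : S.idxOf x = j := List.get_idxOf hnd _
    have hσx : σ x = i := by rw [hσdef, hidxx]; omega
    have hu' : restrict (fun a => decide (a ∉ S.take j)) t = some u := hu
    have hsib : sibling x u = some (PTree.leaf y) := by
      rcases h : sibling x u with _ | s
      · simp [cherryPartner, h] at hy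
      · cases s with
        | leaf z =>
          simp only [cherryPartner, h, Option.some.injEq] at hy
          rw [hy]
        | node a b => simp [cherryPartner, h] at hy
    have hrest : restrict (fun a : ℕ => decide (a ≤ i)) (t.map σ) = some (u.map σ) := by
      rw [restrict_map']
      have hmid : restrict (fun a => decide (σ a ≤ i)) t = some u := by
        rw [restrict_congr' _ (fun a => decide (a ∉ S.take j)) t]
        · exact hu'
        · intro a ha
          have haS : a ∈ S := (henum a).mpr ha
          have h1 := hidx a haS
          have htake := mem_take_iff_indexOf_lt S a haS j
          rw [decide_eq_decide, hσdef, htake]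
          omega
      rw [hmid]; rfl
    have hmapsib : sibling i (u.map σ) = some (PTree.leaf (σ y)) := by
      have hsub := leaves_restrict_subset' _ t u hu'
      have hkey := sibling_map' σ x u
        (fun a ha hfa => hinjS a ((henum a).mpr (hsub a ha)) x hxmem hfa)
      rw [hσx] at hkey
      rw [hkey, hsib]; rfl
    have hola : olaCoord (t.map σ) i = (σ y : ℤ) := by
      simp only [olaCoord, hrest, hmapsib, olaLabel]
    have hp2v : p2vCoord (t.map σ) i = (σ y : ℤ) := by
      have hlab : p2vLabeled (t.map σ) i
          = some (LTree.run (i-1) (i+1) (LTree.ofPTree (u.map σ))) := by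
        unfold p2vLabeled; rw [hrest]; rfl
      set lt := LTree.run (i-1) (i+1) (LTree.ofPTree (u.map σ)) with hlt
      have herase : eraseL lt = u.map σ := by rw [hlt, eraseL_run, eraseL_ofPTree]
      have hmm : Option.map eraseL (LTree.siblingL i lt) = some (PTree.leaf (σ y)) := by
        rw [← sibling_eraseL, herase, hmapsib]
      rcases hs : LTree.siblingL i lt with _ | s
      · rw [hs] at hmm; cases hmm
      · rw [hs] at hmm
        cases s with
        | leaf r =>
          have hr : r = σ y := by
            simp only [Option.map_some, eraseL, Option.some.injEq,
              PTree.leaf.injEq] at hmm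
            exact hmm
          simp only [p2vCoord, hlab, hs, LTree.lbl?, hr, Option.getD_some]
        | node lbl a b =>
          exfalso
          simp only [Option.map_some, eraseL, Option.some.injEq] at hmm
          cases hmm
    rw [hola, hp2v]
  unfold olaVec p2vVec
  apply List.map_congr_left
  intro a ha
  rw [List.mem_range] at ha
  have hlen2 : (t.map σ).leaves.length = n := by rw [leaves_map', List.length_map, hlen]
  rw [hlen2] at ha
  by_cases h0 : a = 0
  · simp [h0]
  by_cases h1 : a = 1
  · simp [h1]
  rw [if_neg h0, if_neg h1, if_neg h0, if_neg h1]
  exact hcoord (a+1) (by omega) (by omega)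

end Phylo
end
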